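/- For any natural number k ≥ 1, ∑_{j=0}^k 1/((j+1)²(k-j+1)²) ≤ 2 · (π²/6) · 4/k². -/

import Mathlib

open Finset Real

lemma partial_basel (m : ℕ) :
    ∑ j ∈ Finset.range m, (1 : ℝ) / ((j : ℝ) + 1) ^ 2 ≤ Real.pi ^ 2 / 6 := by
  have h := hasSum_zeta_two
  have : ∑ j ∈ Finset.range m, (1 : ℝ) / ((j : ℝ) + 1) ^ 2
      = ∑ n ∈ Finset.range (m + 1), (1 : ℝ) / (n : ℝ) ^ 2 := by
    rw [Finset.sum_range_succ']
    simp [div_eq_mul_inv]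
  rw [this]
  exact sum_le_hasSum _ (fun i _ => by positivity) h

theorem stmt_4 (k : ℕ) (hk : 1 ≤ k) :
    ∑ j ∈ Finset.range (k + 1),
        (1 : ℝ) / (((j : ℝ) + 1) ^ 2 * ((k : ℝ) - (j : ℝ) + 1) ^ 2) ≤
      2 * (Real.pi ^ 2 / 6) * (4 / (k : ℝ) ^ 2) := by
  have hπ : (0:ℝ) < Real.pi ^ 2 / 6 := by positivity
  have hk0 : (0:ℝ) < (k:ℝ) := by exact_mod_cast hk
  -- pointwise bound
  have step : ∑ j ∈ Finset.range (k + 1),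
      (1 : ℝ) / (((j : ℝ) + 1) ^ 2 * ((k : ℝ) - (j : ℝ) + 1) ^ 2)
      ≤ ∑ j ∈ Finset.range (k + 1),
        2 / ((k : ℝ) + 2) ^ 2 * (1 / ((j : ℝ) + 1) ^ 2 + 1 / ((k : ℝ) - (j : ℝ) + 1) ^ 2) := by
    apply Finset.sum_le_sum
    intro j hj
    have hjk : (j : ℝ) ≤ (k : ℝ) := by
      exact_mod_cast Nat.lt_succ_iff.mp (Finset.mem_range.mp hj)
    set a : ℝ := (j : ℝ) + 1 with ha'
    set b : ℝ := (k : ℝ) - (j : ℝ) + 1 with hb'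
    have ha : 0 < a := by positivity
    have hb : 0 < b := by simp only [hb']; linarith
    have hab : a + b = (k : ℝ) + 2 := by simp [ha', hb']; ring
    rw [← hab]
    rw [div_add_div _ _ (by positivity : a ^ 2 ≠ 0) (by positivity : b ^ 2 ≠ 0),
      div_mul_div_comm, div_le_div_iff₀ (by positivity) (by positivity)]
    nlinarith [sq_nonneg (a - b), sq_nonneg a, sq_nonneg b, mul_pos ha hb,
      mul_pos (mul_pos ha ha) (mul_pos hb hb)]
  refine step.trans ?_
  rw [← Finset.mul_sum, Finset.sum_add_distrib]
  have hrefl : ∑ j ∈ Finset.range (k + 1), (1:ℝ) / ((k : ℝ) - (j : ℝ) + 1) ^ 2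
      = ∑ j ∈ Finset.range (k + 1), (1:ℝ) / ((j : ℝ) + 1) ^ 2 := by
    rw [← Finset.sum_range_reflect]
    apply Finset.sum_congr rfl
    intro j hj
    have hjk : j ≤ k := Nat.lt_succ_iff.mp (Finset.mem_range.mp hj)
    have h2 : k + 1 - 1 - j = k - j := by omega
    rw [h2, Nat.cast_sub hjk]
    ring_nf
  rw [hrefl]
  have hB := partial_basel (k + 1)
  have h1 : 2 / ((k : ℝ) + 2) ^ 2 *
      (∑ j ∈ Finset.range (k + 1), (1:ℝ) / ((j : ℝ) + 1) ^ 2 +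
       ∑ j ∈ Finset.range (k + 1), (1:ℝ) / ((j : ℝ) + 1) ^ 2)
      ≤ 2 / ((k : ℝ) + 2) ^ 2 * (2 * (Real.pi ^ 2 / 6)) := by
    apply mul_le_mul_of_nonneg_left (by linarith) (by positivity)
  refine h1.trans ?_
  have key : 4/((k:ℝ)+2)^2 ≤ 8/(k:ℝ)^2 := by
    rw [div_le_div_iff₀ (by positivity) (by positivity)]
    nlinarith [hk0]
  calc 2/((k:ℝ)+2)^2 * (2*(Real.pi^2/6)) = (Real.pi^2/6) * (4/((k:ℝ)+2)^2) := by ring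
    _ ≤ (Real.pi^2/6) * (8/(k:ℝ)^2) := mul_le_mul_of_nonneg_left key hπ.le
    _ = 2*(Real.pi^2/6) * (4/(k:ℝ)^2) := by ring
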